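/- The relative entropy of coherence C_RE(ρ) = min over incoherent states σ of S(ρ||σ) equals S(ρ_d) - S(ρ), where ρ_d is the dephasing of ρ in the reference basis; i.e., the dephased state is the closest incoherent state in relative entropy. -/

import Mathlib

open scoped ComplexOrder
open Matrix Polynomial

lemma prod_sub_eigenvalues {n : Type*} [Fintype n] [DecidableEq n]
    {A : Matrix n n ℂ} (hA : A.IsHermitian) (x : ℂ) :
    det (x • (1 : Matrix n n ℂ) - A) = ∏ i, (x - (hA.eigenvalues i : ℂ)) := by
  set V : Matrix n n ℂ := (hA.eigenvectorUnitary : Matrix n n ℂ)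
  have hVV : V * star V = 1 := (Matrix.mem_unitaryGroup_iff).mp hA.eigenvectorUnitary.2
  have hVV' : star V * V = 1 := (Matrix.mem_unitaryGroup_iff').mp hA.eigenvectorUnitary.2
  have hspec := hA.spectral_theorem
  have key : x • (1 : Matrix n n ℂ) - A
      = V * (x • (1 : Matrix n n ℂ) - diagonal (RCLike.ofReal ∘ hA.eigenvalues)) * star V := by
    rw [Unitary.conjStarAlgAut_apply] at hspec
    rw [Matrix.mul_sub, Matrix.sub_mul, ← hspec]
    congr 1
    rw [Matrix.mul_smul, Matrix.smul_mul, Matrix.mul_one, hVV]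
  rw [key, det_mul, det_mul, mul_comm, ← mul_assoc, ← det_mul, hVV',
    det_one, one_mul, smul_one_eq_diagonal, diagonal_sub, det_diagonal]
  simp

lemma multiset_map_eq_of_prod {n : Type*} [Fintype n] {p q : n → ℂ}
    (h : ∀ x : ℂ, ∏ i, (x - p i) = ∏ i, (x - q i)) :
    Finset.univ.val.map p = Finset.univ.val.map q := by
  have hpoly : ((Finset.univ.val.map p).map fun a => (X : ℂ[X]) - C a).prod
      = ((Finset.univ.val.map q).map fun a => (X : ℂ[X]) - C a).prod := by
    apply Polynomial.funext
    intro x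
    rw [Polynomial.eval_multiset_prod, Polynomial.eval_multiset_prod]
    simp only [Multiset.map_map, Function.comp, Polynomial.eval_sub, Polynomial.eval_X,
      Polynomial.eval_C]
    exact h x
  have := congrArg Polynomial.roots hpoly
  rwa [Polynomial.roots_multiset_prod_X_sub_C, Polynomial.roots_multiset_prod_X_sub_C] at this

lemma sum_comp_eq_of_map_eq {n : Type*} [Fintype n] {p q : n → ℝ}
    (h : Finset.univ.val.map p = Finset.univ.val.map q) (g : ℝ → ℝ) :
    ∑ i, g (p i) = ∑ i, g (q i) := by
  have := congrArg (fun s => (Multiset.map g s).sum) h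
  rw [Finset.sum_eq_multiset_sum, Finset.sum_eq_multiset_sum]
  simpa [Multiset.map_map, Function.comp] using this

lemma gibbs {n : Type*} [Fintype n] {p f : n → ℝ}
    (hp0 : ∀ i, 0 ≤ p i) (hps : ∑ i, p i = 1)
    (hf0 : ∀ i, 0 ≤ f i) (hfs : ∑ i, f i = 1)
    (hsupp : ∀ i, f i = 0 → p i = 0) :
    ∑ i, p i * Real.log (f i) ≤ ∑ i, p i * Real.log (p i) := by
  have key : ∀ i, p i * Real.log (f i) - p i * Real.log (p i) ≤ f i - p i := by
    intro i
    rcases eq_or_lt_of_le (hp0 i) with h0 | hpi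
    · simp [← h0, hf0 i]
    · have hfi : 0 < f i := by
        rcases eq_or_lt_of_le (hf0 i) with h1 | h1
        · exact absurd (hsupp i h1.symm) (ne_of_gt hpi)
        · exact h1
      have h2 : Real.log (f i) - Real.log (p i) = Real.log (f i / p i) :=
        (Real.log_div hfi.ne' hpi.ne').symm
      have h3 : Real.log (f i / p i) ≤ f i / p i - 1 :=
        Real.log_le_sub_one_of_pos (div_pos hfi hpi)
      have h4 : p i * Real.log (f i / p i) ≤ p i * (f i / p i - 1) :=
        mul_le_mul_of_nonneg_left h3 (hp0 i)
      have h5 : p i * (f i / p i - 1) = f i - p i := by field_simp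
      calc p i * Real.log (f i) - p i * Real.log (p i)
          = p i * Real.log (f i / p i) := by rw [← h2]; ring
        _ ≤ p i * (f i / p i - 1) := h4
        _ = f i - p i := h5
  have hsum : ∑ i, (p i * Real.log (f i) - p i * Real.log (p i)) ≤ ∑ i, (f i - p i) :=
    Finset.sum_le_sum fun i _ => key i
  rw [Finset.sum_sub_distrib, Finset.sum_sub_distrib, hps, hfs] at hsum
  linarith


/-- Von Neumann entropy (base 2) of a Hermitian matrix, via its eigenvalues. -/
noncomputable def vnEntropy {n : Type*} [Fintype n] [DecidableEq n]
    {ρ : Matrix n n ℂ} (hρ : ρ.IsHermitian) : ℝ :=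
  -∑ i, hρ.eigenvalues i * Real.logb 2 (hρ.eigenvalues i)

/-- The relative entropy of coherence C_RE(ρ) = min over incoherent states σ of
S(ρ‖σ) equals S(ρ_d) - S(ρ), where ρ_d is the dephasing of ρ in the reference
basis. Incoherent states are the diagonal density matrices, encoded by their
diagonal probability vectors f (restricted to those with finite relative
entropy, i.e. whose support contains the support of the diagonal of ρ); for
such σ = diag(f), S(ρ‖σ) = Tr(ρ log ρ) - ∑ i ρ_{ii} log f_i. -/
theorem stmt11 (d : ℕ) (ρ : Matrix (Fin d) (Fin d) ℂ) (hρ : ρ.PosSemidef)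
    (htr : ρ.trace = 1)
    (hdiag : (Matrix.diagonal fun i => ρ i i).IsHermitian) :
    IsLeast
      {x : ℝ | ∃ f : Fin d → ℝ, (∀ i, 0 ≤ f i) ∧ (∑ i, f i = 1) ∧
        (∀ i, f i = 0 → ρ i i = 0) ∧
        x = (-vnEntropy hρ.1) - ∑ i, (ρ i i).re * Real.logb 2 (f i)}
      (vnEntropy hdiag - vnEntropy hρ.1) := by
  set p : Fin d → ℝ := fun i => (ρ i i).re with hp
  have hnn : ∀ i, 0 ≤ ρ i i := by
    intro i
    exact hρ.diag_nonneg
  have hreal : ∀ i, ρ i i = (p i : ℂ) := by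
    intro i
    have h := (Complex.nonneg_iff.mp (hnn i)).2
    exact Complex.ext rfl (by simpa using h.symm)
  have hp0 : ∀ i, 0 ≤ p i := fun i => (Complex.nonneg_iff.mp (hnn i)).1
  have hps : ∑ i, p i = 1 := by
    have := congrArg Complex.re htr
    simpa [Matrix.trace, Matrix.diag, Complex.re_sum] using this
  -- multiset equality between diagonal entries and eigenvalues of the dephased state
  have hms : Finset.univ.val.map p = Finset.univ.val.map hdiag.eigenvalues := by
    have hC : Finset.univ.val.map (fun i => ρ i i)
        = Finset.univ.val.map (fun i => (hdiag.eigenvalues i : ℂ)) := by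
      apply multiset_map_eq_of_prod
      intro x
      rw [← prod_sub_eigenvalues hdiag x, smul_one_eq_diagonal, diagonal_sub, det_diagonal]
    have := congrArg (Multiset.map Complex.re) hC
    simpa [Multiset.map_map, Function.comp_def, ← hp] using this
  have hEd : vnEntropy hdiag = -∑ i, p i * Real.logb 2 (p i) := by
    unfold vnEntropy
    rw [sum_comp_eq_of_map_eq hms (fun x => x * Real.logb 2 x)]
  constructor
  · refine ⟨p, hp0, hps, fun i hi => by rw [hreal i, hi, Complex.ofReal_zero], ?_⟩
    rw [hEd]
    ring
  · rintro x ⟨f, hf0, hfs, hsupp, rfl⟩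
    rw [hEd]
    have hsupp' : ∀ i, f i = 0 → p i = 0 := by
      intro i hi
      rw [hp]
      simp [hsupp i hi]
    have hgibbs := gibbs hp0 hps hf0 hfs hsupp'
    have hlogb : ∑ i, p i * Real.logb 2 (f i) ≤ ∑ i, p i * Real.logb 2 (p i) := by
      simp only [Real.logb, div_eq_mul_inv, ← mul_assoc, ← Finset.sum_mul]
      exact mul_le_mul_of_nonneg_right hgibbs (by positivity)
    linarith
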